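/- Numerical core of Claim 5.3, Case 2 (nef-Fano reduction off the boundary set Ψ_R): Let R > 1 and let χ ∈ M_ℝ satisfy ⟨λ', χ − θ⟩ = R·D/2 and −Q ≤ ⟨λ_0, χ − θ⟩ ≤ η_0/2. Let S ⊆ {1, …, n} be nonempty with ⟨λ', β_i⟩ < 0 for all i ∈ S, and set μ := χ + ∑_{i∈S} β_i. Then |⟨λ_0, μ − θ⟩| ≤ η_0/2 and −R·D/2 < (R/2 − 1)·D ≤ ⟨λ', μ − θ⟩ < R·D/2; in particular μ − θ lies in the enlarged cylinder ∇̄^{R'} for some R' < R. -/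

import Mathlib

noncomputable section

/-- The standard pairing between `N_ℝ = ℝ²` and `M_ℝ = ℝ²`. -/
def pairR (lam chi : Fin 2 → ℝ) : ℝ := ∑ k, lam k * chi k

/-- `D := −∑_{i : ⟨λ', β_i⟩ ≤ 0} ⟨λ', β_i⟩`. -/
def Dval {n : ℕ} (β : Fin n → Fin 2 → ℝ) (lam' : Fin 2 → ℝ) : ℝ :=
  -∑ i ∈ Finset.univ.filter (fun i => pairR lam' (β i) ≤ 0), pairR lam' (β i)

/-- `Q := η_0/2 + ∑_{i : ⟨λ', β_i⟩ < 0} ⟨λ_0, β_i⟩`, where `η_0 = −∑_i ⟨λ_0, β_i⟩`. -/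
def Qval {n : ℕ} (β : Fin n → Fin 2 → ℝ) (lam0 lam' : Fin 2 → ℝ) : ℝ :=
  (-∑ i, pairR lam0 (β i)) / 2 +
    ∑ i ∈ Finset.univ.filter (fun i => pairR lam' (β i) < 0), pairR lam0 (β i)

lemma pairR_add (l x y : Fin 2 → ℝ) : pairR l (x + y) = pairR l x + pairR l y := by
  simp [pairR, mul_add, Finset.sum_add_distrib]

lemma pairR_sub (l x y : Fin 2 → ℝ) : pairR l (x - y) = pairR l x - pairR l y := by
  simp [pairR, mul_sub, Finset.sum_sub_distrib]

lemma pairR_smul (l : Fin 2 → ℝ) (c : ℝ) (x : Fin 2 → ℝ) :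
    pairR l (c • x) = c * pairR l x := by
  simp only [pairR, Finset.mul_sum]
  exact Finset.sum_congr rfl fun k _ => by simp [mul_comm, mul_left_comm]

lemma pairR_sum {ι : Type*} (l : Fin 2 → ℝ) (s : Finset ι) (f : ι → Fin 2 → ℝ) :
    pairR l (∑ i ∈ s, f i) = ∑ i ∈ s, pairR l (f i) := by
  simp only [pairR, Finset.sum_apply, Finset.mul_sum]
  exact Finset.sum_comm

/-- numerical core of Claim 5.3, Case 2. -/
theorem claim_5_3_case_2 {n : ℕ} (hn : 1 ≤ n)
    (β : Fin n → Fin 2 → ℝ)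
    (hβint : ∀ i, ∃ b : Fin 2 → ℤ, β i = fun k => ((b k : ℝ)))
    (hspan : Submodule.span ℝ (Set.range β) = ⊤)
    (lam0 : Fin 2 → ℝ) (hlam0 : ∀ i, pairR lam0 (β i) < 0)
    (lam' : Fin 2 → ℝ) (hlam'ne : lam' ≠ 0)
    (hlam'ω : pairR lam' (∑ i, β i) = 0)
    (θ : Fin 2 → ℝ)
    (R : ℝ) (hR : 1 < R)
    (χ : Fin 2 → ℝ)
    (hχ1 : pairR lam' (χ - θ) = R * Dval β lam' / 2)
    (hχ2 : -Qval β lam0 lam' ≤ pairR lam0 (χ - θ))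
    (hχ3 : pairR lam0 (χ - θ) ≤ (-∑ i, pairR lam0 (β i)) / 2)
    (S : Finset (Fin n)) (hS : S.Nonempty)
    (hSneg : ∀ i ∈ S, pairR lam' (β i) < 0)
    (μ : Fin 2 → ℝ) (hμ : μ = χ + ∑ i ∈ S, β i) :
    |pairR lam0 (μ - θ)| ≤ (-∑ i, pairR lam0 (β i)) / 2 ∧
      -(R * Dval β lam' / 2) < (R / 2 - 1) * Dval β lam' ∧
      (R / 2 - 1) * Dval β lam' ≤ pairR lam' (μ - θ) ∧
      pairR lam' (μ - θ) < R * Dval β lam' / 2 ∧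
      ∃ R' : ℝ, R' < R ∧ |pairR lam' (μ - θ)| ≤ R' * Dval β lam' / 2 := by
  have hne : Nonempty (Fin n) := ⟨⟨0, hn⟩⟩
  set p : Fin n → ℝ := fun i => pairR lam' (β i) with hp
  set q : Fin n → ℝ := fun i => pairR lam0 (β i) with hq
  -- some p i < 0
  have hexneg : ∃ i, p i < 0 := by
    by_contra hcon
    push_neg at hcon
    have hsum : ∑ i, p i = 0 := by
      rw [← pairR_sum]; exact hlam'ω
    have hzero : ∀ i, p i = 0 := by
      intro i
      exact (Finset.sum_eq_zero_iff_of_nonneg (fun i _ => hcon i)).1 hsum i (Finset.mem_univ i)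
    have key : ∀ x ∈ Submodule.span ℝ (Set.range β), pairR lam' x = 0 := by
      intro x hx
      induction hx using Submodule.span_induction with
      | mem x hx => obtain ⟨i, rfl⟩ := hx; exact hzero i
      | zero => simp [pairR]
      | add x y _ _ hx hy =>
          rw [pairR_add, hx, hy, add_zero]
      | smul c x _ hx => rw [pairR_smul, hx, mul_zero]
    have hself : pairR lam' lam' = 0 := key lam' (by rw [hspan]; exact Submodule.mem_top)
    apply hlam'ne
    funext k
    have hk := (Finset.sum_eq_zero_iff_of_nonneg
      (fun k _ => mul_self_nonneg (lam' k))).1 hself k (Finset.mem_univ k)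
    exact mul_self_eq_zero.mp hk
  obtain ⟨i0, hi0⟩ := hexneg
  set F : Finset (Fin n) := Finset.univ.filter (fun i => p i ≤ 0) with hF
  set F' : Finset (Fin n) := Finset.univ.filter (fun i => p i < 0) with hF'
  have hDdef : Dval β lam' = -∑ i ∈ F, p i := rfl
  set D := Dval β lam' with hD
  -- D > 0
  have hDpos : 0 < D := by
    have hsub : ({i0} : Finset (Fin n)) ⊆ F := by
      intro j hj
      simp only [Finset.mem_singleton] at hj
      subst hj
      simp [hF, le_of_lt hi0]
    have hsd := Finset.sum_sdiff (f := p) hsub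
    have hle0 : ∑ i ∈ F \ {i0}, p i ≤ 0 := by
      apply Finset.sum_nonpos
      intro i hi
      have := (Finset.mem_sdiff.mp hi).1
      simp only [hF, Finset.mem_filter] at this
      exact this.2
    have hle : ∑ i ∈ F, p i ≤ p i0 := by
      rw [← hsd, Finset.sum_singleton]; linarith
    rw [hDdef]
    linarith
  -- values of the pairing at μ - θ
  have hμθ : μ - θ = (χ - θ) + ∑ i ∈ S, β i := by
    rw [hμ]; abel
  have hvl' : pairR lam' (μ - θ) = R * D / 2 + ∑ i ∈ S, p i := by
    rw [hμθ, pairR_add, hχ1, pairR_sum]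
  have hvl0 : pairR lam0 (μ - θ) = pairR lam0 (χ - θ) + ∑ i ∈ S, q i := by
    rw [hμθ, pairR_add, pairR_sum]
  -- bounds on ∑_{i∈S} p i
  have hTneg : ∑ i ∈ S, p i < 0 := Finset.sum_neg hSneg hS
  have hSsubF : S ⊆ F := by
    intro i hi; simp [hF, le_of_lt (hSneg i hi)]; exact le_of_lt (hSneg i hi)
  have hTge : -D ≤ ∑ i ∈ S, p i := by
    have hsd := Finset.sum_sdiff (f := p) hSsubF
    have hle0 : ∑ i ∈ F \ S, p i ≤ 0 := by
      apply Finset.sum_nonpos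
      intro i hi
      have := (Finset.mem_sdiff.mp hi).1
      simp only [hF, Finset.mem_filter] at this
      exact this.2
    rw [hDdef]; linarith
  -- bounds on ∑_{i∈S} q i
  have hSqneg : ∑ i ∈ S, q i < 0 := Finset.sum_neg (fun i _ => hlam0 i) hS
  have hSsubF' : S ⊆ F' := by
    intro i hi; simp [hF', hSneg i hi]; exact hSneg i hi
  have hSqge : ∑ i ∈ F', q i ≤ ∑ i ∈ S, q i := by
    have hsd := Finset.sum_sdiff (f := q) hSsubF'
    have hle0 : ∑ i ∈ F' \ S, q i ≤ 0 :=
      Finset.sum_nonpos fun i _ => le_of_lt (hlam0 i)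
    linarith
  set η : ℝ := -∑ i, q i with hη
  have hχ2' : -(η / 2 + ∑ i ∈ F', q i) ≤ pairR lam0 (χ - θ) := hχ2
  have hl0 : |pairR lam0 (μ - θ)| ≤ η / 2 := by
    rw [abs_le, hvl0]
    constructor
    · linarith
    · linarith
  set v := pairR lam' (μ - θ) with hv
  have hv1 : (R / 2 - 1) * D ≤ v := by rw [hvl']; nlinarith
  have hv2 : v < R * D / 2 := by rw [hvl']; linarith
  have hv3 : -(R * D / 2) < (R / 2 - 1) * D := by nlinarith
  refine ⟨hl0, hv3, hv1, hv2, 2 * |v| / D, ?_, ?_⟩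
  · have habs : |v| < R * D / 2 := by
      rw [abs_lt]
      refine ⟨by linarith, hv2⟩
    rw [div_lt_iff₀ hDpos]
    linarith
  · rw [div_mul_eq_mul_div, div_div]
    rw [le_div_iff₀ (by positivity)]
    ring_nf
    nlinarith [abs_nonneg v, hDpos]
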